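/- The normalized thermodynamic integral vanishes: for any choice of strictly positive probability densities p₀, p₁ and the geometric path p_t joining them, ∫₀¹ ∫_Θ p_t(θ) log(p₁(θ)/p₀(θ)) dν(θ) dt = 0. -/

import Mathlib

open MeasureTheory Real

lemma aux_mul_exp_neg_le (y : ℝ) (hy : 0 ≤ y) : y * Real.exp (-y) ≤ Real.exp (-1) := by
  have h : y ≤ Real.exp (y - 1) := by
    have := Real.add_one_le_exp (y - 1); linarith
  calc y * Real.exp (-y) ≤ Real.exp (y - 1) * Real.exp (-y) :=
        mul_le_mul_of_nonneg_right h (Real.exp_pos _).le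
    _ = Real.exp (-1) := by rw [← Real.exp_add]; ring_nf

lemma bound_aux {a b s u t l : ℝ} (ha : 0 < a) (hb : 0 < b) (hs : 0 < s) (hu : u < 1)
    (hts : s ≤ t) (htu : t ≤ u) (hl : l = Real.log (b / a)) :
    a * Real.exp (t * l) * |l| ≤ Real.exp (-1) * (b / (1 - u)) + Real.exp (-1) * (a / s) := by
  have hexp : a * Real.exp l = b := by
    rw [hl, Real.exp_log (div_pos hb ha)]; field_simp
  have h1u : 0 < 1 - u := by linarith
  rcases le_or_gt 0 l with h | h
  · have h2 : a * Real.exp (t * l) * |l| ≤ a * Real.exp (u * l) * l := by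
      rw [abs_of_nonneg h]
      have : Real.exp (t * l) ≤ Real.exp (u * l) :=
        Real.exp_le_exp.mpr (mul_le_mul_of_nonneg_right htu h)
      exact mul_le_mul_of_nonneg_right (mul_le_mul_of_nonneg_left this ha.le) h
    have hexpu : Real.exp (u * l) = Real.exp l * Real.exp (-((1 - u) * l)) := by
      rw [← Real.exp_add]; congr 1; ring
    have h4 : (1 - u) * l * Real.exp (-((1 - u) * l)) ≤ Real.exp (-1) :=
      aux_mul_exp_neg_le _ (mul_nonneg h1u.le h)
    have h5 : a * Real.exp (u * l) * l
        = (b / (1 - u)) * ((1 - u) * l * Real.exp (-((1 - u) * l))) := by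
      rw [hexpu, ← hexp]; field_simp
    have h6 : a * Real.exp (u * l) * l ≤ (b / (1 - u)) * Real.exp (-1) := by
      rw [h5]; exact mul_le_mul_of_nonneg_left h4 (by positivity)
    have hterm2 : 0 ≤ Real.exp (-1) * (a / s) := by positivity
    nlinarith
  · have h2 : a * Real.exp (t * l) * |l| ≤ a * Real.exp (s * l) * (-l) := by
      rw [abs_of_neg h]
      have : Real.exp (t * l) ≤ Real.exp (s * l) :=
        Real.exp_le_exp.mpr (mul_le_mul_of_nonpos_right hts h.le)
      exact mul_le_mul_of_nonneg_right (mul_le_mul_of_nonneg_left this ha.le) (by linarith)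
    have h4 : s * (-l) * Real.exp (-(s * (-l))) ≤ Real.exp (-1) :=
      aux_mul_exp_neg_le _ (mul_nonneg hs.le (by linarith))
    have h5 : a * Real.exp (s * l) * (-l)
        = (a / s) * (s * (-l) * Real.exp (-(s * (-l)))) := by
      have : -(s * (-l)) = s * l := by ring
      rw [this]; field_simp
    have h6 : a * Real.exp (s * l) * (-l) ≤ (a / s) * Real.exp (-1) := by
      rw [h5]; exact mul_le_mul_of_nonneg_left h4 (by positivity)
    have hterm1 : 0 ≤ Real.exp (-1) * (b / (1 - u)) := by positivity
    nlinarith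

lemma cont_bound_aux {a b t l : ℝ} (ha : 0 < a) (hb : 0 < b) (ht0 : 0 ≤ t) (ht1 : t ≤ 1)
    (hl : l = Real.log (b / a)) : a * Real.exp (t * l) ≤ a + b := by
  have hexp : a * Real.exp l = b := by
    rw [hl, Real.exp_log (div_pos hb ha)]; field_simp
  rcases le_or_gt 0 l with h | h
  · have : Real.exp (t * l) ≤ Real.exp l := Real.exp_le_exp.mpr (by nlinarith)
    nlinarith
  · have : Real.exp (t * l) ≤ 1 := Real.exp_le_one_iff.mpr (by nlinarith)
    nlinarith

theorem normalized_thermodynamic_integral_eq_zero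
    {Θ : Type*} [MeasurableSpace Θ] (ν : Measure Θ) [SigmaFinite ν]
    (p0 p1 : Θ → ℝ)
    (hp0pos : ∀ᵐ θ ∂ν, 0 < p0 θ) (hp1pos : ∀ᵐ θ ∂ν, 0 < p1 θ)
    (hp0int : ∫ θ, p0 θ ∂ν = 1) (hp1int : ∫ θ, p1 θ ∂ν = 1)
    (μc : ℝ → ℝ) (hμc : ∀ t, μc t = ∫ θ, p1 θ ^ t * p0 θ ^ (1 - t) ∂ν)
    (hμint : ∀ t ∈ Set.Icc (0:ℝ) 1,
      Integrable (fun θ => p1 θ ^ t * p0 θ ^ (1 - t)) ν)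
    (hμpos : ∀ t ∈ Set.Icc (0:ℝ) 1, 0 < μc t)
    (hdom : Integrable
      (fun x : ℝ × Θ =>
        (p1 x.2 ^ x.1 * p0 x.2 ^ (1 - x.1) / μc x.1) * |Real.log (p1 x.2 / p0 x.2)|)
      ((volume.restrict (Set.Icc (0:ℝ) 1)).prod ν)) :
    (∫ t in (0:ℝ)..1, ∫ θ,
        (p1 θ ^ t * p0 θ ^ (1 - t) / μc t) * Real.log (p1 θ / p0 θ) ∂ν) = 0 := by
  have hint0 : Integrable p0 ν := by
    by_contra h
    rw [MeasureTheory.integral_undef h] at hp0int; norm_num at hp0int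
  have hint1 : Integrable p1 ν := by
    by_contra h
    rw [MeasureTheory.integral_undef h] at hp1int; norm_num at hp1int
  set L : Θ → ℝ := fun θ => Real.log (p1 θ / p0 θ) with hLdef
  have hLm : AEMeasurable L ν :=
    Real.measurable_log.comp_aemeasurable (hint1.aemeasurable.div hint0.aemeasurable)
  have key : ∀ θ, 0 < p0 θ → 0 < p1 θ →
      ∀ t : ℝ, p1 θ ^ t * p0 θ ^ (1 - t) = p0 θ * Real.exp (t * L θ) := by
    intro θ ha hb t
    have hlog : L θ = Real.log (p1 θ) - Real.log (p0 θ) := Real.log_div hb.ne' ha.ne'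
    have h1 : p0 θ * Real.exp (t * L θ)
        = Real.exp (Real.log (p0 θ) + t * (Real.log (p1 θ) - Real.log (p0 θ))) := by
      rw [Real.exp_add, Real.exp_log ha, hlog]
    rw [Real.rpow_def_of_pos hb, Real.rpow_def_of_pos ha, ← Real.exp_add, h1]
    congr 1; ring
  -- μc as a function
  have hμfun : μc = fun t => ∫ θ, p1 θ ^ t * p0 θ ^ (1 - t) ∂ν := funext hμc
  -- continuity of μc on [0,1]
  have hcontμ : ContinuousOn μc (Set.Icc 0 1) := by
    rw [hμfun]
    apply continuousOn_of_dominated (bound := fun θ => p0 θ + p1 θ)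
    · intro t ht; exact (hμint t ht).aestronglyMeasurable
    · intro t ht
      filter_upwards [hp0pos, hp1pos] with θ h0 h1
      rw [key θ h0 h1 t, Real.norm_eq_abs, abs_of_pos (by positivity)]
      exact cont_bound_aux h0 h1 ht.1 ht.2 rfl
    · exact hint0.add hint1
    · filter_upwards [hp0pos, hp1pos] with θ h0 h1
      have heq : (fun t : ℝ => p1 θ ^ t * p0 θ ^ (1 - t))
          = fun t => p0 θ * Real.exp (t * L θ) := funext (key θ h0 h1)
      rw [heq]
      exact (continuous_const.mul
        (Real.continuous_exp.comp (continuous_id.mul continuous_const))).continuousOn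
  -- derivative of μc on (0,1)
  have hD : ∀ t0 ∈ Set.Ioo (0:ℝ) 1,
      HasDerivAt μc (∫ θ, (p1 θ ^ t0 * p0 θ ^ (1 - t0)) * L θ ∂ν) t0 := by
    intro t0 ht0
    obtain ⟨h0, h1⟩ := ht0
    set s : ℝ := t0 / 2 with hsdef
    set u : ℝ := (t0 + 1) / 2 with hudef
    have hs0 : 0 < s := by simp only [hsdef]; linarith
    have hu1 : u < 1 := by simp only [hudef]; linarith
    have hst : s < t0 := by simp only [hsdef]; linarith
    have htu : t0 < u := by simp only [hudef]; linarith
    set ε : ℝ := min (t0 - s) (u - t0) with hεdef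
    have hεpos : 0 < ε := lt_min (by linarith) (by linarith)
    have hball : ∀ x ∈ Metric.ball t0 ε, s ≤ x ∧ x ≤ u := by
      intro x hx
      rw [Metric.mem_ball, Real.dist_eq, abs_lt] at hx
      have h1' := min_le_left (t0 - s) (u - t0)
      have h2' := min_le_right (t0 - s) (u - t0)
      constructor <;> [linarith [hx.1]; linarith [hx.2]]
    have hball01 : ∀ x ∈ Metric.ball t0 ε, x ∈ Set.Icc (0:ℝ) 1 := by
      intro x hx
      obtain ⟨ha', hb'⟩ := hball x hx
      exact ⟨by linarith, by linarith⟩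
    have res := hasDerivAt_integral_of_dominated_loc_of_deriv_le (μ := ν)
      (F := fun t θ => p1 θ ^ t * p0 θ ^ (1 - t))
      (F' := fun t θ => (p1 θ ^ t * p0 θ ^ (1 - t)) * L θ)
      (bound := fun θ => Real.exp (-1) * (p1 θ / (1 - u)) + Real.exp (-1) * (p0 θ / s))
      (Metric.ball_mem_nhds t0 hεpos)
      (Filter.eventually_of_mem (Metric.ball_mem_nhds t0 hεpos)
        fun x hx => (hμint x (hball01 x hx)).aestronglyMeasurable)
      (hμint t0 ⟨h0.le, h1.le⟩)
      ((hμint t0 ⟨h0.le, h1.le⟩).aestronglyMeasurable.mul hLm.aestronglyMeasurable)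
      ?_ ?_ ?_
    · rw [hμfun]; exact res.2
    · -- bound
      filter_upwards [hp0pos, hp1pos] with θ h0' h1'
      intro x hx
      obtain ⟨hxs, hxu⟩ := hball x hx
      rw [key θ h0' h1' x, Real.norm_eq_abs, abs_mul,
        abs_of_pos (show (0:ℝ) < p0 θ * Real.exp (x * L θ) by positivity)]
      exact bound_aux h0' h1' hs0 hu1 hxs hxu rfl
    · exact ((hint1.div_const (1 - u)).const_mul _).add ((hint0.div_const s).const_mul _)
    · -- differentiability
      filter_upwards [hp0pos, hp1pos] with θ h0' h1'
      intro x _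
      have heq : (fun t : ℝ => p1 θ ^ t * p0 θ ^ (1 - t))
          = fun t => p0 θ * Real.exp (t * L θ) := funext (key θ h0' h1')
      rw [heq, key θ h0' h1' x]
      have hd : HasDerivAt (fun t : ℝ => Real.exp (t * L θ)) (Real.exp (x * L θ) * L θ) x :=
        (hasDerivAt_mul_const (L θ)).exp
      simpa [mul_assoc] using hd.const_mul (p0 θ)
  -- g = log ∘ μc
  set g : ℝ → ℝ := fun t => Real.log (μc t) with hgdef
  have hcontg : ContinuousOn g (Set.Icc 0 1) :=
    ContinuousOn.log hcontμ fun t ht => (hμpos t ht).ne'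
  set ρ : Measure (ℝ × Θ) := (volume.restrict (Set.Icc (0:ℝ) 1)).prod ν with hρdef
  -- joint integrability of the signed integrand
  have hae0 : ∀ᵐ x : ℝ × Θ ∂ρ, 0 < p0 x.2 :=
    Measure.quasiMeasurePreserving_snd.ae hp0pos
  have hae1 : ∀ᵐ x : ℝ × Θ ∂ρ, 0 < p1 x.2 :=
    Measure.quasiMeasurePreserving_snd.ae hp1pos
  have haeI : ∀ᵐ x : ℝ × Θ ∂ρ, x.1 ∈ Set.Icc (0:ℝ) 1 :=
    Measure.quasiMeasurePreserving_fst.ae (ae_restrict_mem measurableSet_Icc)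
  have hH : Integrable (fun x : ℝ × Θ =>
      (p1 x.2 ^ x.1 * p0 x.2 ^ (1 - x.1) / μc x.1) * L x.2) ρ := by
    have hq0 : AEMeasurable (fun x : ℝ × Θ => p0 x.2) ρ :=
      hint0.aemeasurable.comp_quasiMeasurePreserving Measure.quasiMeasurePreserving_snd
    have hLq : AEMeasurable (fun x : ℝ × Θ => L x.2) ρ :=
      hLm.comp_quasiMeasurePreserving Measure.quasiMeasurePreserving_snd
    have hμq : AEMeasurable (fun x : ℝ × Θ => μc x.1) ρ :=
      (hcontμ.aemeasurable measurableSet_Icc).comp_quasiMeasurePreserving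
        Measure.quasiMeasurePreserving_fst
    have hexpq : AEMeasurable (fun x : ℝ × Θ => p0 x.2 * Real.exp (x.1 * L x.2)) ρ :=
      hq0.mul (Real.measurable_exp.comp_aemeasurable
        (measurable_fst.aemeasurable.mul hLq))
    have hH'm : AEMeasurable
        (fun x : ℝ × Θ => (p0 x.2 * Real.exp (x.1 * L x.2) / μc x.1) * L x.2) ρ :=
      (hexpq.div hμq).mul hLq
    have heq : (fun x : ℝ × Θ => (p0 x.2 * Real.exp (x.1 * L x.2) / μc x.1) * L x.2)
        =ᵐ[ρ] fun x : ℝ × Θ => (p1 x.2 ^ x.1 * p0 x.2 ^ (1 - x.1) / μc x.1) * L x.2 := by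
      filter_upwards [hae0, hae1] with x h0 h1
      rw [key x.2 h0 h1 x.1]
    refine hdom.mono' ((hH'm.congr heq).aestronglyMeasurable) ?_
    filter_upwards [hae0, hae1, haeI] with x h0 h1 hI
    have hf : 0 < p1 x.2 ^ x.1 * p0 x.2 ^ (1 - x.1) := by
      rw [key x.2 h0 h1 x.1]; positivity
    have hμx := hμpos x.1 hI
    rw [Real.norm_eq_abs, abs_mul, abs_of_pos (div_pos hf hμx)]
  have hFint : IntervalIntegrable
      (fun t => ∫ θ, (p1 θ ^ t * p0 θ ^ (1 - t) / μc t) * L θ ∂ν) volume 0 1 := by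
    have hInt := hH.integral_prod_left
    rw [intervalIntegrable_iff]
    have hsub : Set.uIoc (0:ℝ) 1 ⊆ Set.Icc 0 1 := by
      rw [Set.uIoc_of_le zero_le_one]; exact Set.Ioc_subset_Icc_self
    exact hInt.mono_measure (Measure.restrict_mono hsub le_rfl)
  have hderivg : ∀ t ∈ Set.Ioo (0:ℝ) 1, HasDerivWithinAt g
      (∫ θ, (p1 θ ^ t * p0 θ ^ (1 - t) / μc t) * L θ ∂ν) (Set.Ioi t) t := by
    intro t ht
    have hpos := hμpos t ⟨ht.1.le, ht.2.le⟩
    have hda : HasDerivAt g ((∫ θ, (p1 θ ^ t * p0 θ ^ (1 - t)) * L θ ∂ν) / μc t) t :=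
      (hD t ht).log hpos.ne'
    have heq2 : (∫ θ, (p1 θ ^ t * p0 θ ^ (1 - t)) * L θ ∂ν) / μc t
        = ∫ θ, (p1 θ ^ t * p0 θ ^ (1 - t) / μc t) * L θ ∂ν := by
      rw [eq_comm]
      simp_rw [div_mul_eq_mul_div]
      rw [integral_div]
    exact (heq2 ▸ hda).hasDerivWithinAt
  have hFTC := intervalIntegral.integral_eq_sub_of_hasDeriv_right_of_le
    zero_le_one hcontg hderivg hFint
  rw [hFTC]
  have hμ0 : μc 0 = 1 := by
    rw [hμc]
    simp only [Real.rpow_zero, one_mul, sub_zero, Real.rpow_one]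
    exact hp0int
  have hμ1 : μc 1 = 1 := by
    rw [hμc]
    simp only [Real.rpow_one, sub_self, Real.rpow_zero, mul_one]
    exact hp1int
  simp [hgdef, hμ0, hμ1]
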